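/- arXiv:math/0410221 — 2 statements merged into one kernel-verified Lean document; each statement's English description precedes it below -/
import Mathlib

section
/- Let K be a number field, M a nonzero fractional ideal of K whose class has order n in Cl(K), so that M^n = (a) is principal. Then the O_K-algebra R = O_K ⊕ M ⊕ M^2 ⊕ ⋯ ⊕ M^{n-1}, with multiplication induced by multiplication in K and the identification M^n ≅ O_K via division by a, is a commutative ring that is integral over O_K, and M·R is a principal fractional ideal of R. -/
set_option maxHeartbeats 1000000
set_option synthInstance.maxHeartbeats 400000

universe u

open NumberField DirectSum
open scoped nonZeroDivisors

/-- A witness for Theorem 2.3 of the paper: a commutative `O_K`-algebra `R` which, as an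
`O_K`-module, is `O_K ⊕ M ⊕ M² ⊕ ⋯ ⊕ M^{n-1}`, whose multiplication is induced by
multiplication in `K` together with the identification `M^n ≅ O_K` given by division by
the generator `a` of `M^n`, which is integral over `O_K`, and in which the ideal generated
by (the copy of) `M` is principal. -/
structure IntegralModelWitness (K : Type u) [Field K] [NumberField K]
    (M : FractionalIdeal (𝓞 K)⁰ K) (n : ℕ) (hn : 0 < n) (a : K) : Type (u + 1) where
  R : Type u
  [commRing : CommRing R]
  [algebra : Algebra (𝓞 K) R]
  /-- `R` is integral over `O_K`. -/
  integral : Algebra.IsIntegral (𝓞 K) R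
  /-- As an `O_K`-module, `R` is `O_K ⊕ M ⊕ M² ⊕ ⋯ ⊕ M^{n-1}`. -/
  equiv : R ≃ₗ[𝓞 K] ⨁ i : Fin n, ↥((M ^ (i : ℕ) : FractionalIdeal (𝓞 K)⁰ K) : Submodule (𝓞 K) K)
  /-- the multiplication on `R` is induced by multiplication in `K` when no reduction
  modulo the identification `M^n ≅ O_K` is needed … -/
  mul_of_lt : ∀ (i j : Fin n) (x y : K)
      (hx : x ∈ ((M ^ (i : ℕ) : FractionalIdeal (𝓞 K)⁰ K) : Submodule (𝓞 K) K))
      (hy : y ∈ ((M ^ (j : ℕ) : FractionalIdeal (𝓞 K)⁰ K) : Submodule (𝓞 K) K)),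
      (i : ℕ) + (j : ℕ) < n →
      ∀ hxy : x * y ∈ ((M ^ ((i + j : Fin n) : ℕ) : FractionalIdeal (𝓞 K)⁰ K) :
          Submodule (𝓞 K) K),
        equiv.symm (DirectSum.of _ i ⟨x, hx⟩) * equiv.symm (DirectSum.of _ j ⟨y, hy⟩) =
          equiv.symm (DirectSum.of _ (i + j) ⟨x * y, hxy⟩)
  /-- … and is given by multiplication in `K` followed by division by `a` (the
  identification `M^n ≅ O_K`) when the degrees add up to at least `n`. -/
  mul_of_ge : ∀ (i j : Fin n) (x y : K)
      (hx : x ∈ ((M ^ (i : ℕ) : FractionalIdeal (𝓞 K)⁰ K) : Submodule (𝓞 K) K))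
      (hy : y ∈ ((M ^ (j : ℕ) : FractionalIdeal (𝓞 K)⁰ K) : Submodule (𝓞 K) K)),
      n ≤ (i : ℕ) + (j : ℕ) →
      ∀ hxy : x * y / a ∈ ((M ^ ((i + j : Fin n) : ℕ) : FractionalIdeal (𝓞 K)⁰ K) :
          Submodule (𝓞 K) K),
        equiv.symm (DirectSum.of _ i ⟨x, hx⟩) * equiv.symm (DirectSum.of _ j ⟨y, hy⟩) =
          equiv.symm (DirectSum.of _ (i + j) ⟨x * y / a, hxy⟩)
  /-- the ideal of `R` generated by the copy of `M` (the degree-one summand) is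
  principal. -/
  principal : Submodule.IsPrincipal (Submodule.span R
      {r : R | ∃ (x : K) (hx : x ∈ ((M ^ ((1 % n : ℕ)) : FractionalIdeal (𝓞 K)⁰ K) :
          Submodule (𝓞 K) K)),
        r = equiv.symm (DirectSum.of _ (⟨1 % n, Nat.mod_lt 1 hn⟩ : Fin n) ⟨x, hx⟩)})


section Aux

open Polynomial

variable (K : Type u) [Field K] [NumberField K]
  (M : FractionalIdeal (𝓞 K)⁰ K) (n : ℕ) (a : K)

/-- The `i`-th graded piece, as a submodule of `K`. -/
abbrev Stmt9N (i : ℕ) : Submodule (𝓞 K) K :=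
  ((M ^ i : FractionalIdeal (𝓞 K)⁰ K) : Submodule (𝓞 K) K)

/-- The ambient algebra `K[X]/(X^n - a⁻¹)`. -/
abbrev Stmt9A : Type u := AdjoinRoot (X ^ n - C a⁻¹ : K[X])

/-- The root `t`, satisfying `t^n = a⁻¹`. -/
noncomputable abbrev Stmt9t : Stmt9A K n a := AdjoinRoot.root _

lemma Stmt9t_pow : (Stmt9t K n a) ^ n = algebraMap K _ a⁻¹ := by
  have := AdjoinRoot.mk_self (f := (X ^ n - C a⁻¹ : K[X]))
  rw [map_sub, map_pow, AdjoinRoot.mk_X, AdjoinRoot.mk_C, sub_eq_zero] at this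
  exact this

/-- The map of the `i`-th piece into `A`, `x ↦ x • t^i`. -/
noncomputable def Stmt9ψ (i : ℕ) : Stmt9N K M i →ₗ[𝓞 K] Stmt9A K n a where
  toFun x := (x : K) • (Stmt9t K n a) ^ i
  map_add' x y := by exact add_smul (x : K) (y : K) _
  map_smul' c x := by exact smul_assoc c (x : K) _

/-- The total map `⊕ M^i → A`. -/
noncomputable def Stmt9φ : (⨁ i : Fin n, Stmt9N K M (i : ℕ)) →ₗ[𝓞 K] Stmt9A K n a :=
  DirectSum.toModule (𝓞 K) (Fin n) _ fun i => Stmt9ψ K M n a (i : ℕ)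

lemma Stmt9φ_of (i : Fin n) (x : Stmt9N K M (i : ℕ)) :
    Stmt9φ K M n a (DirectSum.of (fun i : Fin n => Stmt9N K M (i : ℕ)) i x)
      = (x : K) • (Stmt9t K n a) ^ (i : ℕ) := by
  have h := DirectSum.toModule_lof (𝓞 K) (N := Stmt9A K n a)
    (φ := fun i : Fin n => Stmt9ψ K M n a (i : ℕ)) i x
  rwa [DirectSum.lof_eq_of] at h

variable {n a}

lemma Stmt9f_ne (hn : 0 < n) : (X ^ n - C a⁻¹ : K[X]) ≠ 0 := by
  intro h
  have := natDegree_X_pow_sub_C (n := n) (r := (a⁻¹ : K))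
  rw [h, natDegree_zero] at this
  omega

lemma Stmt9li (hn : 0 < n) :
    LinearIndependent K (fun i : Fin n => (Stmt9t K n a) ^ (i : ℕ)) := by
  have hf := Stmt9f_ne K (n := n) (a := a) hn
  have hdim : (AdjoinRoot.powerBasis hf).dim = n := by
    simp [AdjoinRoot.powerBasis, natDegree_X_pow_sub_C]
  have hb := ((AdjoinRoot.powerBasis hf).basis.reindex (finCongr hdim)).linearIndependent
  have heq : ⇑((AdjoinRoot.powerBasis hf).basis.reindex (finCongr hdim))
      = fun i : Fin n => (Stmt9t K n a) ^ (i : ℕ) := by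
    funext i
    rw [Module.Basis.reindex_apply, PowerBasis.coe_basis, AdjoinRoot.powerBasis_gen]
    simp
  rwa [heq] at hb

lemma Stmt9φ_inj (hn : 0 < n) : Function.Injective (Stmt9φ K M n a) := by
  intro x y hxy
  have hx : ∑ i, ((x i : K) - (y i : K)) • (Stmt9t K n a) ^ (i : ℕ) = 0 := by
    rw [← DirectSum.sum_univ_of x, ← DirectSum.sum_univ_of y, map_sum, map_sum] at hxy
    simp only [Stmt9φ_of] at hxy
    simp only [sub_smul, Finset.sum_sub_distrib]
    rw [hxy, sub_self]
  have h := Fintype.linearIndependent_iff.1 (Stmt9li K (a := a) hn) (fun i => ((x i : K) - (y i : K))) hx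
  exact DFinsupp.ext fun i => Subtype.ext (sub_eq_zero.1 (h i))

lemma Stmt9mem_mul {i j : ℕ} {x y : K} (hx : x ∈ Stmt9N K M i) (hy : y ∈ Stmt9N K M j) :
    x * y ∈ Stmt9N K M (i + j) := by
  rw [Stmt9N, pow_add, FractionalIdeal.coe_mul]
  exact Submodule.mul_mem_mul hx hy

lemma Stmt9mem_div (ha : a ≠ 0) (hMn : M ^ n = FractionalIdeal.spanSingleton (𝓞 K)⁰ a)
    {m : ℕ} {z : K} (hz : z ∈ Stmt9N K M (n + m)) : z / a ∈ Stmt9N K M m := by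
  rw [Stmt9N, pow_add, hMn] at hz
  rw [FractionalIdeal.mem_coe, FractionalIdeal.mem_singleton_mul] at hz
  obtain ⟨y, hy, rfl⟩ := hz
  rw [mul_comm, mul_div_assoc, div_self ha, mul_one]
  exact hy

lemma Stmt9val_add_lt {i j : Fin n} (h : (i : ℕ) + (j : ℕ) < n) :
    ((i + j : Fin n) : ℕ) = (i : ℕ) + (j : ℕ) := by
  rw [Fin.val_add, Nat.mod_eq_of_lt h]

lemma Stmt9val_add_ge {i j : Fin n} (h : n ≤ (i : ℕ) + (j : ℕ)) :
    ((i + j : Fin n) : ℕ) = (i : ℕ) + (j : ℕ) - n := by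
  have hi := i.2
  have hj := j.2
  rw [Fin.val_add, Nat.mod_eq_sub_mod h, Nat.mod_eq_of_lt (by omega)]

/-- The ring identity for products in low degree. -/
lemma Stmt9key_lt {i j : Fin n} (x y : K) (h : (i : ℕ) + (j : ℕ) < n) :
    (x • (Stmt9t K n a) ^ (i : ℕ)) * (y • (Stmt9t K n a) ^ (j : ℕ))
      = (x * y) • (Stmt9t K n a) ^ ((i + j : Fin n) : ℕ) := by
  rw [Stmt9val_add_lt h, smul_mul_smul_comm, pow_add]

/-- The ring identity for products in high degree. -/
lemma Stmt9key_ge (ha : a ≠ 0) {i j : Fin n} (x y : K) (h : n ≤ (i : ℕ) + (j : ℕ)) :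
    (x • (Stmt9t K n a) ^ (i : ℕ)) * (y • (Stmt9t K n a) ^ (j : ℕ))
      = (x * y / a) • (Stmt9t K n a) ^ ((i + j : Fin n) : ℕ) := by
  have hs : (i : ℕ) + (j : ℕ) = ((i : ℕ) + (j : ℕ) - n) + n := by omega
  rw [smul_mul_smul_comm, ← pow_add, Stmt9val_add_ge h]
  conv_lhs => rw [hs, pow_add, Stmt9t_pow]
  rw [Algebra.smul_def, Algebra.smul_def, div_eq_mul_inv]
  simp only [map_mul]
  ring

variable (hn : 0 < n) (ha : a ≠ 0)
  (hMn : M ^ n = FractionalIdeal.spanSingleton (𝓞 K)⁰ a)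

/-- The subalgebra `R = ⊕ M^i tⁱ` of `A`. -/
noncomputable def Stmt9S (hn : 0 < n) (ha : a ≠ 0)
    (hMn : M ^ n = FractionalIdeal.spanSingleton (𝓞 K)⁰ a) : Subalgebra (𝓞 K) (Stmt9A K n a) := by
  refine (LinearMap.range (Stmt9φ K M n a)).toSubalgebra ⟨DirectSum.of _ ⟨0, hn⟩
    ⟨1, by simpa using FractionalIdeal.mem_coe.2 (one_mem (1 : FractionalIdeal (𝓞 K)⁰ K))⟩,
    by rw [Stmt9φ_of]; simp⟩ ?_
  rintro z w ⟨u, rfl⟩ ⟨v, rfl⟩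
  rw [← DirectSum.sum_univ_of u, ← DirectSum.sum_univ_of v, map_sum, map_sum,
    Finset.sum_mul_sum]
  refine Submodule.sum_mem _ fun i _ => Submodule.sum_mem _ fun j _ => ?_
  rw [Stmt9φ_of, Stmt9φ_of]
  rcases lt_or_ge ((i : ℕ) + (j : ℕ)) n with h | h
  · refine ⟨DirectSum.of _ (i + j) ⟨_, (Stmt9val_add_lt h) ▸ Stmt9mem_mul K M (u i).2 (v j).2⟩, ?_⟩
    rw [Stmt9φ_of, ← Stmt9key_lt]
    exact h
  · refine ⟨DirectSum.of _ (i + j) ⟨(u i : K) * (v j : K) / a, ?_⟩, ?_⟩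
    · have hm := Stmt9mem_mul K M (u i).2 (v j).2
      rw [show (i : ℕ) + (j : ℕ) = n + ((i : ℕ) + (j : ℕ) - n) by omega] at hm
      exact (Stmt9val_add_ge h) ▸ Stmt9mem_div K M ha hMn hm
    · rw [Stmt9φ_of, ← Stmt9key_ge K ha _ _ h]

lemma Stmt9mem_S {z : Stmt9A K n a} :
    z ∈ Stmt9S K M hn ha hMn ↔ z ∈ LinearMap.range (Stmt9φ K M n a) := Iff.rfl

/-- The direct sum mapped onto `R`. -/
noncomputable def Stmt9ψR :
    (⨁ i : Fin n, Stmt9N K M (i : ℕ)) →ₗ[𝓞 K] (Stmt9S K M hn ha hMn) where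
  toFun x := ⟨Stmt9φ K M n a x, (Stmt9mem_S K M hn ha hMn).2 (LinearMap.mem_range_self _ x)⟩
  map_add' x y := Subtype.ext (by exact (Stmt9φ K M n a).map_add x y)
  map_smul' c x := Subtype.ext (by exact (Stmt9φ K M n a).map_smul c x)

lemma Stmt9ψR_bij : Function.Bijective (Stmt9ψR K M hn ha hMn) := by
  constructor
  · intro x y hxy
    exact Stmt9φ_inj K M hn (congrArg Subtype.val hxy)
  · rintro ⟨z, hz⟩
    obtain ⟨u, rfl⟩ := (Stmt9mem_S K M hn ha hMn).1 hz
    exact ⟨u, rfl⟩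

/-- The `O_K`-linear equivalence `R ≃ ⊕ M^i`. -/
noncomputable def Stmt9equiv :
    (Stmt9S K M hn ha hMn) ≃ₗ[𝓞 K] ⨁ i : Fin n, Stmt9N K M (i : ℕ) :=
  (LinearEquiv.ofBijective _ (Stmt9ψR_bij K M hn ha hMn)).symm

lemma Stmt9equiv_symm_of (i : Fin n) (x : Stmt9N K M (i : ℕ)) :
    ((Stmt9equiv K M hn ha hMn).symm (DirectSum.of _ i x) : Stmt9A K n a)
      = (x : K) • (Stmt9t K n a) ^ (i : ℕ) := by
  rw [Stmt9equiv, LinearEquiv.symm_symm, LinearEquiv.ofBijective_apply]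
  exact Stmt9φ_of K M n a i x

end Aux

noncomputable def Stmt9witness (K : Type u) [Field K] [NumberField K]
    (M : FractionalIdeal (𝓞 K)⁰ K) (hM : M ≠ 0) {n : ℕ} {a : K} (hn : 0 < n) (ha : a ≠ 0)
    (hMn : M ^ n = FractionalIdeal.spanSingleton (𝓞 K)⁰ a) :
    IntegralModelWitness K M n hn a where
  R := ↥(Stmt9S K M hn ha hMn)
  commRing := inferInstance
  algebra := inferInstance
  integral := by
    haveI : ∀ i : Fin n, Module.Finite (𝓞 K) ↥(Stmt9N K M (i : ℕ)) := fun i =>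
      Module.Finite.iff_fg.2 (FractionalIdeal.fg_of_isUnit _
        (isUnit_iff_ne_zero.2 (pow_ne_zero _ hM)))
    haveI : Module.Finite (𝓞 K) (⨁ i : Fin n, ↥(Stmt9N K M (i : ℕ))) :=
      Module.Finite.equiv (DirectSum.linearEquivFunOnFintype (𝓞 K) (Fin n) _).symm
    haveI : Module.Finite (𝓞 K) ↥(Stmt9S K M hn ha hMn) :=
      Module.Finite.equiv (Stmt9equiv K M hn ha hMn).symm
    exact Algebra.IsIntegral.of_finite _ _
  equiv := Stmt9equiv K M hn ha hMn
  mul_of_lt := by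
    intro i j x y hx hy hlt hxy
    refine Subtype.ext ?_
    rw [MulMemClass.coe_mul, Stmt9equiv_symm_of, Stmt9equiv_symm_of, Stmt9equiv_symm_of]
    exact Stmt9key_lt K x y hlt
  mul_of_ge := by
    intro i j x y hx hy hge hxy
    refine Subtype.ext ?_
    rw [MulMemClass.coe_mul, Stmt9equiv_symm_of, Stmt9equiv_symm_of, Stmt9equiv_symm_of]
    exact Stmt9key_ge K ha x y hge
  principal := by
    have htop : (1 : ↥(Stmt9S K M hn ha hMn)) ∈ Submodule.span ↥(Stmt9S K M hn ha hMn)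
        {r : ↥(Stmt9S K M hn ha hMn) |
          ∃ (x : K) (hx : x ∈ Stmt9N K M (1 % n)),
            r = (Stmt9equiv K M hn ha hMn).symm (DirectSum.of _
              (⟨1 % n, Nat.mod_lt 1 hn⟩ : Fin n) ⟨x, hx⟩)} := by
      rcases Nat.lt_or_ge 1 n with hn2 | hn2
      · -- n ≥ 2
        have h1n : 1 % n = 1 := Nat.mod_eq_of_lt hn2
        have hprod : a ∈ (Stmt9N K M 1) * (Stmt9N K M (n - 1)) := by
          have hpow : (M ^ 1) * (M ^ (n - 1)) = M ^ n := by
            rw [← pow_add]; congr 1; omega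
          have : a ∈ Stmt9N K M n := by
            rw [Stmt9N, hMn]
            exact FractionalIdeal.mem_coe.2 (FractionalIdeal.mem_spanSingleton_self _ a)
          rwa [Stmt9N, ← hpow, FractionalIdeal.coe_mul] at this
        have main : ∀ z ∈ (Stmt9N K M 1) * (Stmt9N K M (n - 1)),
            ∃ r : ↥(Stmt9S K M hn ha hMn), (r : Stmt9A K n a) = algebraMap K _ (z / a) ∧
              r ∈ Submodule.span ↥(Stmt9S K M hn ha hMn)
                {r : ↥(Stmt9S K M hn ha hMn) |
                  ∃ (x : K) (hx : x ∈ Stmt9N K M (1 % n)),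
                    r = (Stmt9equiv K M hn ha hMn).symm (DirectSum.of _
                      (⟨1 % n, Nat.mod_lt 1 hn⟩ : Fin n) ⟨x, hx⟩)} := by
          intro z hz
          refine Submodule.mul_induction_on hz (fun m hm c hc => ?_) (fun x y hx hy => ?_)
          ·
            have hm' : m ∈ Stmt9N K M (1 % n) := by rw [h1n]; exact hm
            set r1 : ↥(Stmt9S K M hn ha hMn) := (Stmt9equiv K M hn ha hMn).symm
              (DirectSum.of _ (⟨1 % n, Nat.mod_lt 1 hn⟩ : Fin n) ⟨m, hm'⟩) with hr1
            set r2 : ↥(Stmt9S K M hn ha hMn) := (Stmt9equiv K M hn ha hMn).symm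
              (DirectSum.of _ (⟨n - 1, by omega⟩ : Fin n) ⟨c, hc⟩) with hr2
            refine ⟨r2 * r1, ?_, Ideal.mul_mem_left _ r2 (Submodule.subset_span ⟨m, hm', hr1⟩)⟩
            rw [MulMemClass.coe_mul, hr1, hr2, Stmt9equiv_symm_of, Stmt9equiv_symm_of]
            show (c • (Stmt9t K n a) ^ (n - 1)) * (m • (Stmt9t K n a) ^ (1 % n)) = _
            rw [h1n, smul_mul_smul_comm, pow_one, ← pow_succ,
              show n - 1 + 1 = n by omega, Stmt9t_pow, Algebra.smul_def, div_eq_mul_inv]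
            simp only [map_mul]
            ring
          · obtain ⟨rx, hrx, hrxs⟩ := hx
            obtain ⟨ry, hry, hrys⟩ := hy
            refine ⟨rx + ry, ?_, Submodule.add_mem _ hrxs hrys⟩
            rw [AddMemClass.coe_add, hrx, hry, add_div, map_add]
        obtain ⟨r, hr, hrs⟩ := main a hprod
        have : r = 1 := by
          refine Subtype.ext ?_
          rw [hr, div_self ha, map_one, OneMemClass.coe_one]
        rwa [this] at hrs
      · -- n = 1
        have hn1 : n = 1 := by omega
        subst hn1
        refine Submodule.subset_span ⟨1, ?_, ?_⟩
        · show (1 : K) ∈ Stmt9N K M (1 % 1)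
          simpa using FractionalIdeal.mem_coe.2 (one_mem (1 : FractionalIdeal (𝓞 K)⁰ K))
        · refine Subtype.ext ?_
          rw [OneMemClass.coe_one, Stmt9equiv_symm_of]
          simp [Nat.mod_self]
    refine ⟨⟨1, ?_⟩⟩
    have h1 : (Submodule.span ↥(Stmt9S K M hn ha hMn) {(1 : ↥(Stmt9S K M hn ha hMn))}) = ⊤ :=
      Ideal.span_singleton_one
    rw [h1]
    refine Submodule.eq_top_iff'.mpr fun r => ?_
    simpa using Submodule.smul_mem _ r htop

/-- Theorem 2.3 of the paper: if the class of the nonzero fractional ideal `M` has order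
`n` in the class group, with `M^n = (a)` principal, then there is a commutative ring
`R = O_K ⊕ M ⊕ ⋯ ⊕ M^{n-1}` (multiplication induced by that of `K` and the identification
`M^n ≅ O_K` via division by `a`), integral over `O_K`, in which `M·R` is principal. -/
theorem stmt_9 (K : Type u) [Field K] [NumberField K]
    (M : FractionalIdeal (𝓞 K)⁰ K) (hM : M ≠ 0) (n : ℕ) (hn : 0 < n)
    (horder : orderOf (ClassGroup.mk (K := K) (Units.mk0 M hM)) = n)
    (a : K) (ha : a ≠ 0) (hMn : M ^ n = FractionalIdeal.spanSingleton (𝓞 K)⁰ a) :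
    Nonempty (IntegralModelWitness K M n hn a) := by
  exact ⟨Stmt9witness K M hM hn ha hMn⟩
end

section
/- For every number field K there exists a finite extension L of K such that every ideal class of K becomes trivial in L; i.e., for every nonzero fractional ideal M of O_K, the extended fractional ideal M·O_L is principal. -/
universe u

open NumberField
open scoped nonZeroDivisors

open FractionalIdeal in
/-- Nonzero fractional ideals over a Dedekind domain have unique `n`-th roots. -/
lemma FracIdealAux.pow_inj {R : Type*} [CommRing R] [IsDedekindDomain R]
    {K : Type*} [Field K] [Algebra R K] [IsFractionRing R K]
    {I J : FractionalIdeal R⁰ K} (hI : I ≠ 0) (hJ : J ≠ 0) {n : ℕ} (hn : n ≠ 0)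
    (h : I ^ n = J ^ n) : I = J := by
  classical
  rw [← finprod_heightOneSpectrum_factorization' (K := K) hI,
      ← finprod_heightOneSpectrum_factorization' (K := K) hJ]
  refine finprod_congr fun v => ?_
  have hc := congrArg (count K v) h
  rw [count_pow, count_pow] at hc
  rw [mul_left_cancel₀ (by exact_mod_cast hn : (n : ℤ) ≠ 0) hc]

open FractionalIdeal in
lemma FracIdealAux.extended_pow {A B : Type*} [CommRing A] [CommRing B] {f : A →+* B}
    {K : Type*} {M : Submonoid A} [CommRing K] [Algebra A K] [IsLocalization M K]
    (L : Type*) {N : Submonoid B} [CommRing L] [Algebra B L] [IsLocalization N L]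
    (hf : M ≤ Submonoid.comap f N) (I : FractionalIdeal M K) (n : ℕ) :
    (I ^ n).extended L hf = (I.extended L hf) ^ n := by
  induction n with
  | zero => simpa using extended_one L hf
  | succ n ih => rw [pow_succ, extended_mul, ih, pow_succ]

open FractionalIdeal in
lemma FracIdealAux.extended_spanSingleton {A B : Type*} [CommRing A] [CommRing B] {f : A →+* B}
    {K : Type*} {M : Submonoid A} [CommRing K] [Algebra A K] [IsLocalization M K]
    (L : Type*) {N : Submonoid B} [CommRing L] [Algebra B L] [IsLocalization N L]
    (hf : M ≤ Submonoid.comap f N) (x : K) :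
    (spanSingleton M x).extended L hf
      = spanSingleton N (IsLocalization.map (S := K) L f hf x) := by
  apply coeToSubmodule_injective
  simp only [coe_extended_eq_span, coe_spanSingleton]
  apply le_antisymm
  · rw [Submodule.span_le]
    rintro _ ⟨y, hy, rfl⟩
    rw [SetLike.mem_coe] at hy
    rw [FractionalIdeal.mem_spanSingleton] at hy
    obtain ⟨z, rfl⟩ := hy
    rw [SetLike.mem_coe, Algebra.smul_def, _root_.map_mul, IsLocalization.map_eq,
      ← Algebra.smul_def]
    exact Submodule.smul_mem _ _ (Submodule.mem_span_singleton_self _)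
  · rw [Submodule.span_le, Set.singleton_subset_iff]
    refine Submodule.subset_span ⟨x, ?_, rfl⟩
    exact FractionalIdeal.mem_spanSingleton_self M x

set_option maxHeartbeats 2000000 in
set_option synthInstance.maxHeartbeats 1000000 in
/-- For every number field `K` there is a finite extension `L/K` in which every ideal
class of `K` becomes trivial: for every nonzero fractional ideal `M` of `K`, the
`O_L`-submodule of `L` generated by the image of `M` is principal. -/
theorem stmt_10 (K : Type u) [Field K] [NumberField K] :
    ∃ (L : Type u) (_ : Field L) (_ : Algebra K L), FiniteDimensional K L ∧
      ∀ M : FractionalIdeal (𝓞 K)⁰ K, M ≠ 0 →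
        (Submodule.span (𝓞 L)
          (algebraMap K L '' ((M : Submodule (𝓞 K) K) : Set K))).IsPrincipal := by
  classical
  set n := Fintype.card (ClassGroup (𝓞 K)) with hn
  have hn0 : n ≠ 0 := Fintype.card_ne_zero
  -- choose a representative fractional ideal for each ideal class
  have hsurj : ∀ c : ClassGroup (𝓞 K),
      ∃ U : (FractionalIdeal (𝓞 K)⁰ K)ˣ, ClassGroup.mk K U = c := by
    intro c
    obtain ⟨I, hI⟩ := ClassGroup.mk0_surjective c
    exact ⟨FractionalIdeal.mk0 K I, by rw [ClassGroup.mk_mk0]; exact hI⟩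
  choose U hU using hsurj
  -- the n-th power of each representative is principal, generated by `a c`
  have hpow : ∀ c : ClassGroup (𝓞 K), ∃ x : K,
      ((U c : FractionalIdeal (𝓞 K)⁰ K)) ^ n
        = FractionalIdeal.spanSingleton (𝓞 K)⁰ x := by
    intro c
    have h1 : ClassGroup.mk K ((U c) ^ n) = 1 := by
      rw [map_pow, hU, hn, pow_card_eq_one]
    obtain ⟨x, hx⟩ := (ClassGroup.mk_eq_one_iff.mp h1).principal
    refine ⟨x, FractionalIdeal.coeToSubmodule_injective ?_⟩
    simp only [FractionalIdeal.coe_spanSingleton]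
    rw [← Units.val_pow_eq_pow_val]
    exact hx
  choose a ha using hpow
  have haz : ∀ c, a c ≠ 0 := by
    intro c h
    have h2 := ha c
    rw [h, FractionalIdeal.spanSingleton_zero] at h2
    exact pow_ne_zero n (U c).ne_zero h2
  -- adjoin n-th roots of all the `a c` inside an algebraic closure
  let Ω := AlgebraicClosure K
  have hroot : ∀ c : ClassGroup (𝓞 K), ∃ z : Ω, z ^ n = algebraMap K Ω (a c) :=
    fun c => IsAlgClosed.exists_pow_nat_eq _ (Nat.pos_of_ne_zero hn0)
  choose α hα using hroot
  let L : IntermediateField K Ω := IntermediateField.adjoin K (Set.range α)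
  haveI : Finite (Set.range α) := Set.finite_range α
  haveI hfd : FiniteDimensional K L := by
    apply IntermediateField.finiteDimensional_adjoin
    intro x _
    exact (Algebra.IsAlgebraic.isAlgebraic (R := K) x).isIntegral
  haveI : CharZero ↥L := charZero_of_injective_algebraMap (algebraMap K ↥L).injective
  haveI : FiniteDimensional ℚ ↥L := Module.Finite.trans K ↥L
  haveI : NumberField ↥L := ⟨⟩
  refine ⟨↥L, inferInstance, inferInstance, hfd, ?_⟩
  intro M hM
  -- the ring hom between rings of integers, and the extension of fractional ideals
  set f : (𝓞 K) →+* (𝓞 ↥L) := algebraMap (𝓞 K) (𝓞 ↥L) with hfdef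
  have hinj : Function.Injective f := by
    have h1 : Function.Injective (algebraMap (𝓞 K) ↥L) := by
      rw [IsScalarTower.algebraMap_eq (𝓞 K) K ↥L]
      exact (algebraMap K ↥L).injective.comp (IsFractionRing.injective (𝓞 K) K)
    intro x y h
    apply h1
    rw [IsScalarTower.algebraMap_eq (𝓞 K) (𝓞 ↥L) ↥L, RingHom.comp_apply,
      RingHom.comp_apply, h]
  have hf : (𝓞 K)⁰ ≤ Submonoid.comap f (𝓞 ↥L)⁰ := by
    intro x hx
    simp only [Submonoid.mem_comap]
    refine mem_nonZeroDivisors_of_ne_zero fun h => ?_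
    have hx0 : x ≠ 0 := mem_nonZeroDivisors_iff_ne_zero.mp hx
    exact hx0 (hinj (by rw [h, map_zero]))
  have hg : IsLocalization.map (S := K) ↥L f hf = algebraMap K ↥L := by
    apply IsLocalization.ringHom_ext (𝓞 K)⁰
    ext x
    rw [RingHom.comp_apply, RingHom.comp_apply, IsLocalization.map_eq,
      ← IsScalarTower.algebraMap_apply (𝓞 K) (𝓞 ↥L) ↥L,
      IsScalarTower.algebraMap_apply (𝓞 K) K ↥L]
  -- decompose `M` as a principal ideal times a class representative
  set W : (FractionalIdeal (𝓞 K)⁰ K)ˣ := Units.mk0 M hM with hW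
  set c : ClassGroup (𝓞 K) := ClassGroup.mk K W with hc
  have h1 : ClassGroup.mk K (W * (U c)⁻¹) = 1 := by
    rw [map_mul, map_inv, hU, ← hc, mul_inv_cancel]
  obtain ⟨b, hb⟩ := (ClassGroup.mk_eq_one_iff.mp h1).principal
  have hbspan : ((W * (U c)⁻¹ : (FractionalIdeal (𝓞 K)⁰ K)ˣ) : FractionalIdeal (𝓞 K)⁰ K)
      = FractionalIdeal.spanSingleton (𝓞 K)⁰ b := by
    apply FractionalIdeal.coeToSubmodule_injective
    simp only [FractionalIdeal.coe_spanSingleton]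
    exact hb
  have hM_eq : M = FractionalIdeal.spanSingleton (𝓞 K)⁰ b * (U c : FractionalIdeal (𝓞 K)⁰ K) := by
    have h2 : (W * (U c)⁻¹) * (U c) = W := inv_mul_cancel_right W (U c)
    have h3 := congrArg (Units.val) h2
    rw [Units.val_mul, hbspan] at h3
    exact h3.symm
  -- the root of `a c` in `L`
  have hαL : α c ∈ L := IntermediateField.subset_adjoin K _ ⟨c, rfl⟩
  set β : ↥L := ⟨α c, hαL⟩ with hβdef
  have hβ : β ^ n = algebraMap K ↥L (a c) := by
    apply Subtype.ext
    push_cast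
    exact hα c
  have hβ0 : β ≠ 0 := by
    intro h
    have h2 := hβ
    rw [h, zero_pow hn0] at h2
    exact haz c ((algebraMap K ↥L).injective (by rw [← h2, map_zero]))
  -- the extension of the representative is principal, generated by β
  set E : FractionalIdeal (𝓞 ↥L)⁰ ↥L :=
    (U c : FractionalIdeal (𝓞 K)⁰ K).extended ↥L hf with hE
  have hEn : E ^ n = FractionalIdeal.spanSingleton (𝓞 ↥L)⁰ β ^ n := by
    rw [hE, ← FracIdealAux.extended_pow, ha c, FracIdealAux.extended_spanSingleton,
      hg, ← hβ, FractionalIdeal.spanSingleton_pow]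
  have hβs0 : FractionalIdeal.spanSingleton (𝓞 ↥L)⁰ β ≠ 0 := by
    rw [ne_eq, FractionalIdeal.spanSingleton_eq_zero_iff]
    exact hβ0
  have hE0 : E ≠ 0 := by
    intro h
    rw [h, zero_pow hn0] at hEn
    exact pow_ne_zero n hβs0 hEn.symm
  have hEprin : E = FractionalIdeal.spanSingleton (𝓞 ↥L)⁰ β :=
    FracIdealAux.pow_inj hE0 hβs0 hn0 hEn
  -- the extension of M is principal
  have hMext : M.extended ↥L hf
      = FractionalIdeal.spanSingleton (𝓞 ↥L)⁰ (algebraMap K ↥L b * β) := by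
    rw [hM_eq, FractionalIdeal.extended_mul, FracIdealAux.extended_spanSingleton, hg,
      ← hE, hEprin, FractionalIdeal.spanSingleton_mul_spanSingleton]
  -- conclude
  have hset : (Submodule.span (𝓞 ↥L)
      (algebraMap K ↥L '' ((M : Submodule (𝓞 K) K) : Set K)))
      = ((M.extended ↥L hf : FractionalIdeal (𝓞 ↥L)⁰ ↥L) : Submodule (𝓞 ↥L) ↥L) := by
    rw [FractionalIdeal.coe_extended_eq_span, hg]
    rfl
  rw [hset, hMext, FractionalIdeal.coe_spanSingleton]
  exact ⟨⟨_, rfl⟩⟩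
end
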